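/- On the solid torus M = S¹ × D² (with D² the closed unit disk), the flow generated by the vector field ρ·X, where X is the unit vector field tangent to the S¹ direction and ρ : S¹ → [0,1] is a continuous function vanishing at exactly one point θ₀ ∈ S¹ (ρ(θ) = 1 outside a neighborhood of θ₀, ρ(θ) comparable to the distance to θ₀ near θ₀), has the property that for every regular point p, every t > 0 and every δ > 0, the local rescaled stable and unstable sets of p are trivial: W^{r,s}_{δ,t}(p) = W^{r,u}_{δ,t}(p) = {p}. -/

import Mathlib

open Metric Filter Topology Set

lemma coe_dist_le (x y : ℝ) :
    dist ((x : AddCircle (1:ℝ))) ((y : AddCircle (1:ℝ))) ≤ |x - y| := by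
  rw [dist_eq_norm, ← AddCircle.coe_sub]
  simpa using QuotientAddGroup.norm_mk_le_norm (S := AddSubgroup.zmultiples (1:ℝ)) (m := x - y)

lemma rho_tendsto_zero
    (ρ : AddCircle (1 : ℝ) → ℝ) (hρc : Continuous ρ)
    (hρnn : ∀ θ, 0 ≤ ρ θ) (hρle : ∀ θ, ρ θ ≤ 1)
    (θ₀ : AddCircle (1 : ℝ)) (hz : ∀ θ, ρ θ = 0 ↔ θ = θ₀)
    (hshape : ∃ ε > 0, (∀ θ, ε ≤ dist θ θ₀ → ρ θ = 1) ∧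
      ∃ c > 0, ∃ C > 0, ∀ θ, dist θ θ₀ < ε →
        c * dist θ θ₀ ≤ ρ θ ∧ ρ θ ≤ C * dist θ θ₀)
    (c : ℝ → ℝ) (hder : ∀ t : ℝ, HasDerivAt c (ρ ((c t : ℝ) : AddCircle (1 : ℝ))) t)
    (hne : ρ ((c 0 : ℝ) : AddCircle (1 : ℝ)) ≠ 0) :
    Tendsto (fun s => ρ ((c s : ℝ) : AddCircle (1 : ℝ))) atTop (𝓝 0) ∧
    Tendsto (fun s => ρ ((c s : ℝ) : AddCircle (1 : ℝ))) atBot (𝓝 0) := by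
  obtain ⟨ε, hε, hout, C₀, hC₀, C, hC, hbnd⟩ := hshape
  -- global linear bound
  obtain ⟨K, hK, hKb⟩ : ∃ K > 0, ∀ θ, ρ θ ≤ K * dist θ θ₀ := by
    refine ⟨max C (1/ε), lt_max_of_lt_left hC, fun θ => ?_⟩
    rcases lt_or_ge (dist θ θ₀) ε with h | h
    · exact le_trans (hbnd θ h).2 (mul_le_mul_of_nonneg_right (le_max_left _ _) dist_nonneg)
    · calc ρ θ ≤ 1 := hρle θ
        _ = (1/ε) * ε := by field_simp
        _ ≤ (1/ε) * dist θ θ₀ := by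
            apply mul_le_mul_of_nonneg_left h; positivity
        _ ≤ max C (1/ε) * dist θ θ₀ :=
            mul_le_mul_of_nonneg_right (le_max_right _ _) dist_nonneg
  have hdiff : Differentiable ℝ c := fun s => (hder s).differentiableAt
  have hcont : Continuous c := hdiff.continuous
  have hmono : Monotone c := by
    apply monotone_of_deriv_nonneg hdiff
    intro s; rw [(hder s).deriv]; exact hρnn _
  -- Gronwall: once c hits a lift of θ₀, it stays there
  have gron : ∀ x₀ : ℝ, ((x₀ : ℝ) : AddCircle (1:ℝ)) = θ₀ → ∀ S u : ℝ, c S = x₀ → S ≤ u →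
      c u = x₀ := by
    intro x₀ hx₀ S u hS hSu
    have key : ∀ s ∈ Icc S u, ‖c s - x₀‖ ≤ gronwallBound 0 K 0 (s - S) := by
      apply norm_le_gronwallBound_of_norm_deriv_right_le
        (f := fun s => c s - x₀) (f' := fun s => ρ ((c s : ℝ) : AddCircle (1:ℝ)))
      · exact (hcont.sub continuous_const).continuousOn
      · intro s _
        exact ((hder s).sub_const x₀).hasDerivWithinAt
      · simp [hS]
      · intro s _
        rw [Real.norm_eq_abs, abs_of_nonneg (hρnn _), Real.norm_eq_abs, add_zero]
        calc ρ ((c s : ℝ) : AddCircle (1:ℝ)) ≤ K * dist ((c s : ℝ) : AddCircle (1:ℝ)) θ₀ := hKb _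
          _ ≤ K * |c s - x₀| := by
              apply mul_le_mul_of_nonneg_left _ hK.le
              rw [← hx₀]; exact coe_dist_le _ _
    have := key u ⟨hSu, le_refl u⟩
    rw [gronwallBound_ε0_δ0, Real.norm_eq_abs, ← sub_eq_zero] at *
    exact abs_nonpos_iff.mp this
  obtain ⟨y₀, hy₀⟩ := QuotientAddGroup.mk_surjective θ₀
  have hlift : ∀ m : ℤ, ((y₀ + (m:ℝ) : ℝ) : AddCircle (1:ℝ)) = θ₀ := by
    intro m; rw [AddCircle.coe_add]; simp [hy₀]
  -- c is bounded above
  have hba : BddAbove (range c) := by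
    by_contra hub
    set x₀ : ℝ := y₀ + (⌈c 0 - y₀⌉ : ℝ) with hx₀def
    have hx₀ : ((x₀ : ℝ) : AddCircle (1:ℝ)) = θ₀ := hlift _
    have hge : c 0 ≤ x₀ := by
      have := Int.le_ceil (c 0 - y₀); linarith
    obtain ⟨T, hT⟩ : ∃ T, x₀ < c T := by
      rw [not_bddAbove_iff] at hub
      obtain ⟨z, ⟨T, rfl⟩, hz'⟩ := hub x₀
      exact ⟨T, hz'⟩
    have hT0 : (0:ℝ) ≤ T := by
      by_contra h
      have := hmono (le_of_lt (not_le.mp h))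
      linarith
    obtain ⟨S, _, hS⟩ : ∃ S ∈ Icc (0:ℝ) T, c S = x₀ :=
      intermediate_value_Icc hT0 hcont.continuousOn ⟨hge, hT.le⟩
    have : ∀ s, c s ≤ x₀ := by
      intro s
      rcases le_total s S with h | h
      · rw [← hS]; exact hmono h
      · exact (gron x₀ hx₀ S s hS h).le
    exact hub ⟨x₀, fun z ⟨s, hs⟩ => hs ▸ this s⟩
  -- c is bounded below
  have hbb : BddBelow (range c) := by
    by_contra hlb
    set x₁ : ℝ := y₀ + (⌊c 0 - y₀⌋ : ℝ) with hx₁def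
    have hx₁ : ((x₁ : ℝ) : AddCircle (1:ℝ)) = θ₀ := hlift _
    have hle : x₁ ≤ c 0 := by
      have := Int.floor_le (c 0 - y₀); linarith
    obtain ⟨T, hT⟩ : ∃ T, c T < x₁ := by
      rw [not_bddBelow_iff] at hlb
      obtain ⟨z, ⟨T, rfl⟩, hz'⟩ := hlb x₁
      exact ⟨T, hz'⟩
    have hT0 : T ≤ (0:ℝ) := by
      by_contra h
      have := hmono (le_of_lt (not_le.mp h))
      linarith
    obtain ⟨S, hSmem, hS⟩ : ∃ S ∈ Icc T 0, c S = x₁ :=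
      intermediate_value_Icc hT0 hcont.continuousOn ⟨hT.le, hle⟩
    have : c 0 = x₁ := gron x₁ hx₁ S 0 hS hSmem.2
    apply hne
    rw [this, hx₁, hz]
  constructor
  · -- forward limit
    have hlim : Tendsto c atTop (𝓝 (⨆ s, c s)) := tendsto_atTop_ciSup hmono hba
    have hρlim : Tendsto (fun s => ρ ((c s : ℝ) : AddCircle (1:ℝ))) atTop
        (𝓝 (ρ ((⨆ s, c s : ℝ) : AddCircle (1:ℝ)))) :=
      ((hρc.comp (AddCircle.continuous_mk' (1:ℝ))).tendsto _).comp hlim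
    have hL0 : ρ ((⨆ s, c s : ℝ) : AddCircle (1:ℝ)) = 0 := by
      by_contra hane
      set a := ρ ((⨆ s, c s : ℝ) : AddCircle (1:ℝ)) with hadef
      have ha : 0 < a := (hρnn _).lt_of_ne (Ne.symm hane)
      clear_value a
      obtain ⟨T₀, hT₀⟩ : ∃ T₀, ∀ s ≥ T₀, a/2 < ρ ((c s : ℝ) : AddCircle (1:ℝ)) :=
        eventually_atTop.mp (hρlim.eventually (lt_mem_nhds (half_lt_self ha)))
      have hgd : ∀ x : ℝ, HasDerivAt (fun s => c s - a/2 * s)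
          (ρ ((c x : ℝ) : AddCircle (1:ℝ)) - a/2) x := by
        intro x
        have h := (hder x).sub (((hasDerivAt_id' x).const_mul (a/2))); rw [mul_one] at h; exact h
      have hg : MonotoneOn (fun s => c s - a/2 * s) (Ici T₀) := by
        apply monotoneOn_of_deriv_nonneg (convex_Ici T₀)
        · exact (hcont.sub (continuous_const.mul continuous_id)).continuousOn
        · exact fun x _ => ((hgd x).differentiableAt).differentiableWithinAt
        · intro x hx
          rw [(hgd x).deriv]
          rw [interior_Ici] at hx
          linarith [hT₀ x (le_of_lt hx)]
      have hcT : c T₀ ≤ ⨆ s, c s := le_ciSup hba T₀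
      set b := T₀ + (2/a) * ((⨆ s, c s) - c T₀) + 1 with hbdef
      clear_value b
      have hb : T₀ ≤ b := by
        have : 0 ≤ (2/a) * ((⨆ s, c s) - c T₀) := mul_nonneg (by positivity) (by linarith)
        linarith
      have hgb := hg self_mem_Ici hb hb
      have hcb : c b ≤ ⨆ s, c s := le_ciSup hba b
      have harith : a/2 * b - a/2 * T₀ = ((⨆ s, c s) - c T₀) + a/2 := by
        rw [hbdef]; field_simp; ring
      simp only at hgb
      linarith
    rwa [hL0] at hρlim
  · -- backward limit
    have hlim : Tendsto c atBot (𝓝 (⨅ s, c s)) := tendsto_atBot_ciInf hmono hbb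
    have hρlim : Tendsto (fun s => ρ ((c s : ℝ) : AddCircle (1:ℝ))) atBot
        (𝓝 (ρ ((⨅ s, c s : ℝ) : AddCircle (1:ℝ)))) :=
      ((hρc.comp (AddCircle.continuous_mk' (1:ℝ))).tendsto _).comp hlim
    have hL0 : ρ ((⨅ s, c s : ℝ) : AddCircle (1:ℝ)) = 0 := by
      by_contra hane
      set a := ρ ((⨅ s, c s : ℝ) : AddCircle (1:ℝ)) with hadef
      have ha : 0 < a := (hρnn _).lt_of_ne (Ne.symm hane)
      clear_value a
      obtain ⟨T₀, hT₀⟩ : ∃ T₀, ∀ s ≤ T₀, a/2 < ρ ((c s : ℝ) : AddCircle (1:ℝ)) :=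
        eventually_atBot.mp (hρlim.eventually (lt_mem_nhds (half_lt_self ha)))
      have hgd : ∀ x : ℝ, HasDerivAt (fun s => c s - a/2 * s)
          (ρ ((c x : ℝ) : AddCircle (1:ℝ)) - a/2) x := by
        intro x
        have h := (hder x).sub (((hasDerivAt_id' x).const_mul (a/2))); rw [mul_one] at h; exact h
      have hg : MonotoneOn (fun s => c s - a/2 * s) (Iic T₀) := by
        apply monotoneOn_of_deriv_nonneg (convex_Iic T₀)
        · exact (hcont.sub (continuous_const.mul continuous_id)).continuousOn
        · exact fun x _ => ((hgd x).differentiableAt).differentiableWithinAt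
        · intro x hx
          rw [(hgd x).deriv]
          rw [interior_Iic] at hx
          linarith [hT₀ x (le_of_lt hx)]
      have hcT : (⨅ s, c s) ≤ c T₀ := ciInf_le hbb T₀
      set b := T₀ - (2/a) * (c T₀ - ⨅ s, c s) - 1 with hbdef
      clear_value b
      have hb : b ≤ T₀ := by
        have : 0 ≤ (2/a) * (c T₀ - ⨅ s, c s) := mul_nonneg (by positivity) (by linarith)
        linarith
      have hgb := hg hb self_mem_Iic hb
      have hcb : (⨅ s, c s) ≤ c b := ciInf_le hbb b
      have harith : a/2 * T₀ - a/2 * b = (c T₀ - ⨅ s, c s) + a/2 := by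
        rw [hbdef]; field_simp; ring
      simp only at hgb
      linarith
    rwa [hL0] at hρlim


theorem solid_torus_trivial_rescaled_sets
    (ρ : AddCircle (1 : ℝ) → ℝ) (hρc : Continuous ρ)
    (hρnn : ∀ θ, 0 ≤ ρ θ) (hρle : ∀ θ, ρ θ ≤ 1)
    (θ₀ : AddCircle (1 : ℝ)) (hz : ∀ θ, ρ θ = 0 ↔ θ = θ₀)
    (hshape : ∃ ε > 0, (∀ θ, ε ≤ dist θ θ₀ → ρ θ = 1) ∧
      ∃ c > 0, ∃ C > 0, ∀ θ, dist θ θ₀ < ε →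
        c * dist θ θ₀ ≤ ρ θ ∧ ρ θ ≤ C * dist θ θ₀)
    (Θ : ℝ → AddCircle (1 : ℝ) → AddCircle (1 : ℝ))
    (hΘ : Continuous fun p : ℝ × AddCircle (1 : ℝ) => Θ p.1 p.2)
    (h0 : ∀ θ, Θ 0 θ = θ) (hadd : ∀ t s θ, Θ (t + s) θ = Θ t (Θ s θ))
    (hgen : ∀ θ : AddCircle (1 : ℝ), ∃ c : ℝ → ℝ,
      ((c 0 : ℝ) : AddCircle (1 : ℝ)) = θ ∧
      (∀ t : ℝ, ((c t : ℝ) : AddCircle (1 : ℝ)) = Θ t θ) ∧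
      ∀ t : ℝ, HasDerivAt c (ρ ((c t : ℝ) : AddCircle (1 : ℝ))) t)
    (p : AddCircle (1 : ℝ) × (Metric.closedBall (0 : ℝ × ℝ) 1))
    (hreg : ρ p.1 ≠ 0) (t : ℝ) (ht : 0 < t) (δ : ℝ) (hδ : 0 < δ) :
    {q : AddCircle (1 : ℝ) × (Metric.closedBall (0 : ℝ × ℝ) 1) |
        q.1 = p.1 ∧ ∀ n : ℕ, dist p.2 q.2 ≤ δ * ρ (Θ ((n : ℝ) * t) p.1)} = {p} ∧
    {q : AddCircle (1 : ℝ) × (Metric.closedBall (0 : ℝ × ℝ) 1) |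
        q.1 = p.1 ∧ ∀ n : ℕ, dist p.2 q.2 ≤ δ * ρ (Θ (-((n : ℝ) * t)) p.1)} = {p} := by
  obtain ⟨c, hc0, hcΘ, hder⟩ := hgen p.1
  have hne : ρ ((c 0 : ℝ) : AddCircle (1 : ℝ)) ≠ 0 := by rwa [hc0]
  obtain ⟨hfwd, hbwd⟩ := rho_tendsto_zero ρ hρc hρnn hρle θ₀ hz hshape c hder hne
  have hnt : Tendsto (fun n : ℕ => (n : ℝ) * t) atTop atTop :=
    Tendsto.atTop_mul_const ht tendsto_natCast_atTop_atTop
  have hfwd' : Tendsto (fun n : ℕ => δ * ρ (Θ ((n : ℝ) * t) p.1)) atTop (𝓝 0) := by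
    have : Tendsto (fun n : ℕ => δ * ρ ((c ((n : ℝ) * t) : ℝ) : AddCircle (1:ℝ))) atTop
        (𝓝 (δ * 0)) := (tendsto_const_nhds.mul (hfwd.comp hnt))
    rw [mul_zero] at this
    convert this using 2 with n
    rw [hcΘ]
  have hbwd' : Tendsto (fun n : ℕ => δ * ρ (Θ (-((n : ℝ) * t)) p.1)) atTop (𝓝 0) := by
    have hnt' : Tendsto (fun n : ℕ => -((n : ℝ) * t)) atTop atBot :=
      tendsto_neg_atBot_iff.mpr hnt
    have : Tendsto (fun n : ℕ => δ * ρ ((c (-((n : ℝ) * t)) : ℝ) : AddCircle (1:ℝ))) atTop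
        (𝓝 (δ * 0)) := (tendsto_const_nhds.mul (hbwd.comp hnt'))
    rw [mul_zero] at this
    convert this using 2 with n
    rw [hcΘ]
  have hmem : ∀ f : ℕ → ℝ, Tendsto f atTop (𝓝 0) → (∀ n, 0 ≤ f n) →
      {q : AddCircle (1 : ℝ) × (Metric.closedBall (0 : ℝ × ℝ) 1) |
        q.1 = p.1 ∧ ∀ n : ℕ, dist p.2 q.2 ≤ f n} = {p} := by
    intro f hf hfnn
    ext q
    simp only [mem_setOf_eq, mem_singleton_iff]
    constructor
    · rintro ⟨h1, h2⟩
      have hd : dist p.2 q.2 ≤ 0 := ge_of_tendsto hf (Eventually.of_forall h2)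
      have : p.2 = q.2 := dist_le_zero.mp hd
      exact Prod.ext h1 this.symm
    · intro h
      subst h
      refine ⟨rfl, fun n => ?_⟩
      rw [dist_self]
      exact hfnn n
  exact ⟨hmem _ hfwd' (fun n => mul_nonneg hδ.le (hρnn _)),
    hmem _ hbwd' (fun n => mul_nonneg hδ.le (hρnn _))⟩
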